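/- Let μ ∈ ℝ^p be nonzero, Σ a symmetric positive definite p×p matrix, r > 0, R > 0, and let w* = (R / √(μᵀΣ⁻¹μ)) Σ⁻¹μ. If w ∈ ℝ^p is nonzero with wᵀΣw ≤ R² and (wᵀμ - r)/√(wᵀΣw) = √(μᵀΣ⁻¹μ) - r/R, then w = w*. -/

import Mathlib

open Matrix

set_option maxHeartbeats 1000000 in
theorem sharpe_optimal_portfolio_unique {p : ℕ} (μ : Fin p → ℝ) (hμ : μ ≠ 0)
    (S : Matrix (Fin p) (Fin p) ℝ) (hS : S.PosDef)
    (r R : ℝ) (hr : 0 < r) (hR : 0 < R)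
    (wstar : Fin p → ℝ) (hwstar : wstar = (R / Real.sqrt (μ ⬝ᵥ S⁻¹ *ᵥ μ)) • (S⁻¹ *ᵥ μ))
    (w : Fin p → ℝ) (hw : w ≠ 0) (hrisk : w ⬝ᵥ S *ᵥ w ≤ R ^ 2)
    (hopt : (w ⬝ᵥ μ - r) / Real.sqrt (w ⬝ᵥ S *ᵥ w) = Real.sqrt (μ ⬝ᵥ S⁻¹ *ᵥ μ) - r / R) :
    w = wstar := by
  set v : Fin p → ℝ := S⁻¹ *ᵥ μ with hv
  have hSinv : (S⁻¹).PosDef := hS.inv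
  have hM2 : 0 < μ ⬝ᵥ S⁻¹ *ᵥ μ := by
    have := hSinv.dotProduct_mulVec_pos hμ
    simpa using this
  have hσ2 : 0 < w ⬝ᵥ S *ᵥ w := by
    have := hS.dotProduct_mulVec_pos hw
    simpa using this
  set M2 : ℝ := μ ⬝ᵥ S⁻¹ *ᵥ μ with hM2def
  set M : ℝ := Real.sqrt M2 with hMdef
  have hM : 0 < M := Real.sqrt_pos.mpr hM2
  have hMsq : M ^ 2 = M2 := Real.sq_sqrt hM2.le
  set σ2 : ℝ := w ⬝ᵥ S *ᵥ w with hσ2def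
  set σ : ℝ := Real.sqrt σ2 with hσdef
  have hσ : 0 < σ := Real.sqrt_pos.mpr hσ2
  have hσsq : σ ^ 2 = σ2 := Real.sq_sqrt hσ2.le
  have hdet : IsUnit S.det := hS.det_pos.ne'.isUnit
  have hSv : S *ᵥ v = μ := by
    rw [hv, mulVec_mulVec, Matrix.mul_nonsing_inv S hdet, one_mulVec]
  have hST : Sᵀ = S := by
    have h := hS.isHermitian.eq
    rwa [show Sᴴ = Sᵀ from rfl] at h
  have hsym : ∀ x y : Fin p → ℝ, x ⬝ᵥ S *ᵥ y = y ⬝ᵥ S *ᵥ x := by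
    intro x y
    rw [dotProduct_mulVec, dotProduct_comm, ← mulVec_transpose, hST]
  have hvμ : v ⬝ᵥ μ = M2 := by rw [hM2def, dotProduct_comm]
  have hwv : w ⬝ᵥ S *ᵥ v = w ⬝ᵥ μ := by rw [hSv]
  have hvw : v ⬝ᵥ S *ᵥ w = w ⬝ᵥ μ := by rw [hsym, hSv]
  have hvv : v ⬝ᵥ S *ᵥ v = M2 := by rw [hSv, hvμ]
  -- Cauchy–Schwarz
  have hCS : (w ⬝ᵥ μ) ^ 2 ≤ σ2 * M2 := by
    have hnn : 0 ≤ (M2 • w - (w ⬝ᵥ μ) • v) ⬝ᵥ S *ᵥ (M2 • w - (w ⬝ᵥ μ) • v) := by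
      simpa using hS.posSemidef.dotProduct_mulVec_nonneg (M2 • w - (w ⬝ᵥ μ) • v)
    have hexp : (M2 • w - (w ⬝ᵥ μ) • v) ⬝ᵥ S *ᵥ (M2 • w - (w ⬝ᵥ μ) • v)
        = M2 * (σ2 * M2 - (w ⬝ᵥ μ) ^ 2) := by
      simp only [mulVec_sub, mulVec_smul, dotProduct_sub, sub_dotProduct,
        dotProduct_smul, smul_dotProduct, smul_eq_mul, hwv, hvw, hvv, ← hσ2def]
      ring
    nlinarith [hnn, hexp, hM2]
  have hwμ : w ⬝ᵥ μ = r + (M - r / R) * σ := by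
    have h : (w ⬝ᵥ μ - r) = (M - r / R) * σ := by
      rw [← hopt]; field_simp
    linarith
  have hle : w ⬝ᵥ μ ≤ σ * M :=
    by nlinarith [hCS, mul_pos hσ hM, hσsq, hMsq]
  have h1 : R ≤ σ := by
    by_contra hc
    push_neg at hc
    have hle' : R * (w ⬝ᵥ μ) ≤ R * (σ * M) := by nlinarith [hle, hR]
    have hexp' : R * (w ⬝ᵥ μ) = R * r + R * M * σ - r * σ := by
      rw [hwμ]; field_simp; ring
    have hpos : 0 < r * (R - σ) := mul_pos hr (by linarith)
    nlinarith [hle', hexp']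
  have h2 : σ ≤ R := by nlinarith [hrisk, hσsq, hσ, hR]
  have hσR : σ = R := le_antisymm h2 h1
  have hσ2R : σ2 = R ^ 2 := by rw [← hσsq, hσR]
  have hwμval : w ⬝ᵥ μ = M * R := by
    rw [hwμ, hσR]; field_simp; ring
  have hkey : (w - wstar) ⬝ᵥ S *ᵥ (w - wstar) = 0 := by
    rw [hwstar]
    simp only [mulVec_sub, mulVec_smul, dotProduct_sub, sub_dotProduct,
      dotProduct_smul, smul_dotProduct, smul_eq_mul, hwv, hvw, hvv, ← hσ2def]
    rw [hσ2R, hwμval, ← hMsq]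
    field_simp
    ring
  by_contra hne
  have hd : w - wstar ≠ 0 := sub_ne_zero.mpr hne
  have hpos := hS.dotProduct_mulVec_pos hd
  simp only [star_trivial] at hpos
  rw [hkey] at hpos
  exact lt_irrefl 0 hpos
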